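/- Let (𝒱, ℰ) be a tree-cover of a finite metric space (X,d) and let W be a minimum spanning tree of (X,d). For an edge e of the nerve N(𝒱,ℰ), let ℰ(e) ∈ ℰ be its corresponding cover set and let W|ℰ(e) be the restriction of W to the vertex subset ℰ(e) (keeping exactly those edges of W with both endpoints in ℰ(e)). Then for every edge e of N(𝒱,ℰ), the graph W|ℰ(e) is a tree. -/

import Mathlib

open scoped Classical

noncomputable section

namespace Skel

/-- `m`-dimensional Euclidean space. -/
abbrev Euc (m : ℕ) : Type := EuclideanSpace ℝ (Fin m)

/-- Length (Euclidean distance between the two members) of an unordered pair of points. -/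
def sym2Dist {X : Type*} [PseudoMetricSpace X] : Sym2 X → ℝ :=
  Sym2.lift ⟨fun u v => dist u v, fun u v => dist_comm u v⟩

/-- Euclidean length of an edge under a vertex placement `pos`. -/
def edgeLen {V : Type*} {m : ℕ} (pos : V → Euc m) (e : Sym2 V) : ℝ :=
  sym2Dist (e.map pos)

/-- Straight-line segment realizing an unordered pair of vertices. -/
def edgeSeg {V : Type*} {m : ℕ} (pos : V → Euc m) : Sym2 V → Set (Euc m) :=
  Sym2.lift ⟨fun u v => segment ℝ (pos u) (pos v), fun u v => segment_symm ℝ (pos u) (pos v)⟩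

/-- Closed `ε`-offset of a set. -/
def offset {X : Type*} [PseudoMetricSpace X] (S : Set X) (ε : ℝ) : Set X :=
  {x | ∃ y ∈ S, dist x y ≤ ε}

/-- Geometric realization (union of straight-line edges) of a graph. -/
def shape {V : Type*} {m : ℕ} (G : SimpleGraph V) (pos : V → Euc m) : Set (Euc m) :=
  ⋃ e ∈ G.edgeSet, edgeSeg pos e

/-- Geometric realization of the portion of a graph inside a vertex subset `S`. -/
def shapeOn {V : Type*} {m : ℕ} (G : SimpleGraph V) (pos : V → Euc m) (S : Set V) :
    Set (Euc m) :=
  (pos '' S) ∪ ⋃ e ∈ {e ∈ G.edgeSet | ∀ x ∈ e, x ∈ S}, edgeSeg pos e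

/-- Total length of a walk in a geometric graph. -/
def walkCost {X : Type*} [PseudoMetricSpace X] {G : SimpleGraph X} {u v : X}
    (p : G.Walk u v) : ℝ :=
  (p.edges.map sym2Dist).sum

/-- Shortest-path metric of a geometric graph (edges weighted by Euclidean length). -/
def pathDist {X : Type*} [PseudoMetricSpace X] (G : SimpleGraph X) (u v : X) : ℝ :=
  sInf {c | ∃ p : G.Walk u v, walkCost p = c}

/-- Maximal edge length of a geometric graph. -/
def lmax {X : Type*} [PseudoMetricSpace X] (G : SimpleGraph X) : ℝ :=
  sSup (sym2Dist '' G.edgeSet)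

/-- Minimal distance between two sets. -/
def setDist {X : Type*} [PseudoMetricSpace X] (s t : Set X) : ℝ :=
  sInf {d | ∃ x ∈ s, ∃ y ∈ t, d = dist x y}

/-- Two edges (unordered pairs) are non-adjacent: distinct and sharing no vertex. -/
def nonAdjacent {V : Type*} (e h : Sym2 V) : Prop :=
  e ≠ h ∧ ∀ x, x ∈ e → x ∉ h

/-- The set of angles between pairs of (distinct) edges adjacent at a common vertex. -/
def angleSet {V : Type*} {m : ℕ} (T : SimpleGraph V) (pos : V → Euc m) : Set ℝ :=
  {θ | ∃ v a b : V, T.Adj v a ∧ T.Adj v b ∧ a ≠ b ∧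
    θ = EuclideanGeometry.angle (pos a) (pos v) (pos b)}

/-- Total edge cost of a graph, edges weighted by `d`. -/
def graphCost {X : Type*} (d : X → X → ℝ) (W : SimpleGraph X) : ℝ :=
  (∑ᶠ u, ∑ᶠ v, if W.Adj u v then d u v else 0) / 2

/-- A minimum spanning tree on the whole vertex type, edges weighted by `d`. -/
def IsMST {X : Type*} (d : X → X → ℝ) (W : SimpleGraph X) : Prop :=
  W.IsTree ∧ ∀ W' : SimpleGraph X, W'.IsTree → graphCost d W ≤ graphCost d W'

/-- A graph on an ambient type whose edges lie in `S` and which spans `S` as a tree. -/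
def IsSpanningTreeOn {X : Type*} (S : Set X) (W : SimpleGraph X) : Prop :=
  (∀ a b, W.Adj a b → a ∈ S ∧ b ∈ S) ∧ (W.induce S).IsTree

/-- A minimum spanning tree of the metric subspace `(S, d)`, realized on the ambient type. -/
def IsMSTOn {X : Type*} (d : X → X → ℝ) (S : Set X) (W : SimpleGraph X) : Prop :=
  IsSpanningTreeOn S W ∧
    ∀ W' : SimpleGraph X, IsSpanningTreeOn S W' → graphCost d W ≤ graphCost d W'

/-- Graph-cover `(𝒱, ℰ)` of the space `X`. -/
def IsGraphCover {X : Type*} (V : Set X) (E : Set (Set X)) : Prop :=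
  V.Finite ∧ E.Finite ∧ ⋃₀ E = Set.univ ∧
    (∀ A ∈ E, ∀ B ∈ E, A ≠ B → (A ∩ B).Subsingleton ∧ A ∩ B ⊆ V) ∧
    (∀ A ∈ E, ∃ u v : X, u ≠ v ∧ V ∩ A = {u, v})

/-- Underlying simple graph of the nerve of a cover. -/
def nerve {X : Type*} (V : Set X) (E : Set (Set X)) : SimpleGraph V where
  Adj u v := u ≠ v ∧ ∃ A ∈ E, (u : X) ∈ A ∧ (v : X) ∈ A
  symm := by
    refine ⟨?_⟩
    rintro u v ⟨h, A, hA, hu, hv⟩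
    exact ⟨Ne.symm h, A, hA, hv, hu⟩
  loopless := by
    refine ⟨?_⟩
    rintro u ⟨h, -⟩
    exact h rfl

/-- The nerve, as a multigraph with one edge per cover set, is a tree:
its underlying simple graph is a tree and there are no parallel edges. -/
def NerveIsTree {X : Type*} (V : Set X) (E : Set (Set X)) : Prop :=
  (nerve V E).IsTree ∧
    ∀ A ∈ E, ∀ B ∈ E, ∀ u v : X, u ≠ v → u ∈ V → v ∈ V →
      u ∈ A → v ∈ A → u ∈ B → v ∈ B → A = B

/-- Tree-cover of a space with distance function `d`. -/
def IsTreeCover {X : Type*} (d : X → X → ℝ) (V : Set X) (E : Set (Set X)) : Prop :=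
  IsGraphCover V E ∧ NerveIsTree V E ∧
    ∀ u v : X, u ≠ v → (¬ ∃ A ∈ E, u ∈ A ∧ v ∈ A) →
      ∃ t : X, max (d u t) (d v t) < d u v

/-- Standing hypotheses: `T` is a straight-line tree realized by `pos` in `ℝ^m`,
`C` is an `ε`-sample of `T`, `G` is a connected graph with vertex set `C` which is a
`γ`-approximation of `(T, C)`, `D ⊆ C` is `δ`-sparse in the path metric of `G`,
every vertex of `T` lies within `ε` of `D`, `θT` is the minimal angle between adjacent
edges of `T`, and `δ` satisfies the key inequality. -/
structure Standing {V : Type*} {m : ℕ} (T : SimpleGraph V) (pos : V → Euc m)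
    (C D : Set (Euc m)) (G : SimpleGraph (Euc m)) (γ ε δ θT : ℝ) : Prop where
  tree : T.IsTree
  pos_inj : Function.Injective pos
  eps_pos : 0 < ε
  gamma_ge : 1 ≤ γ
  C_fin : C.Finite
  sample : ∀ p ∈ C, ∃ q ∈ shape T pos, dist p q ≤ ε
  G_support : ∀ a b, G.Adj a b → a ∈ C ∧ b ∈ C
  G_conn : ∀ a ∈ C, ∀ b ∈ C, G.Reachable a b
  approx1 : ∀ e ∈ T.edgeSet, ∀ a ∈ C, ∀ b ∈ C,
      a ∈ offset (edgeSeg pos e) ε → b ∈ offset (edgeSeg pos e) ε →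
      pathDist G a b ≤ γ * dist a b
  approx2 : ∀ e ∈ T.edgeSet, ∀ h ∈ T.edgeSet, nonAdjacent e h →
      lmax G + 2 * ε < setDist (edgeSeg pos e) (edgeSeg pos h)
  D_sub : D ⊆ C
  sparse : ∀ a ∈ D, ∀ b ∈ D, a ≠ b → δ ≤ pathDist G a b
  vert_close : ∀ v : V, ∃ p ∈ D, dist (pos v) p ≤ ε
  theta_least : IsLeast (angleSet T pos) θT
  delta_ge : 2 * γ * (ε + ε / Real.sin (θT / 2)
      + lmax G / Real.sin (min θT (Real.pi / 2))) ≤ δ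

end Skel

open Skel


section MSTAuxiliary

open SimpleGraph

/-- Splitting reachability across a possibly-deleted edge. -/
lemma Skel.reach_split' {V : Type*} (G : SimpleGraph V) (a b : V) :
    ∀ {w y : V}, G.Walk w y →
      (G.deleteEdges {s(a,b)}).Reachable w y ∨
      ((G.deleteEdges {s(a,b)}).Reachable w a ∧ (G.deleteEdges {s(a,b)}).Reachable b y) ∨
      ((G.deleteEdges {s(a,b)}).Reachable w b ∧ (G.deleteEdges {s(a,b)}).Reachable a y) := by
  intro w y p
  induction p with
  | nil => exact Or.inl (Reachable.refl _)
  | @cons w x y hadj p ih =>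
    by_cases he : s(w, x) = s(a, b)
    · rcases Sym2.eq_iff.mp he with ⟨rfl, rfl⟩ | ⟨rfl, rfl⟩
      · rcases ih with h | ⟨h1, h2⟩ | ⟨h1, h2⟩
        · exact Or.inr (Or.inl ⟨Reachable.refl _, h⟩)
        · exact Or.inr (Or.inl ⟨Reachable.refl _, h2⟩)
        · exact Or.inl h2
      · rcases ih with h | ⟨h1, h2⟩ | ⟨h1, h2⟩
        · exact Or.inr (Or.inr ⟨Reachable.refl _, h⟩)
        · exact Or.inl h2
        · exact Or.inr (Or.inr ⟨Reachable.refl _, h2⟩)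
    · have hd : (G.deleteEdges {s(a,b)}).Adj w x := by simp [hadj, he]
      rcases ih with h | ⟨h1, h2⟩ | ⟨h1, h2⟩
      · exact Or.inl (hd.reachable.trans h)
      · exact Or.inr (Or.inl ⟨hd.reachable.trans h1, h2⟩)
      · exact Or.inr (Or.inr ⟨hd.reachable.trans h1, h2⟩)

lemma Skel.reach_split {V : Type*} (G : SimpleGraph V) (a b : V) {w : V} (h : G.Reachable w a) :
    (G.deleteEdges {s(a,b)}).Reachable w a ∨ (G.deleteEdges {s(a,b)}).Reachable w b := by
  obtain ⟨p⟩ := h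
  rcases Skel.reach_split' G a b p with h | ⟨h1, h2⟩ | ⟨h1, h2⟩
  · exact Or.inl h
  · exact Or.inl h1
  · exact Or.inr h1

lemma Skel.sum_single {V : Type*} [Fintype V] (p q : V) (c : ℝ) :
    ∑ a : V, ∑ b : V, (if a = p ∧ b = q then c else 0) = c := by
  simp [ite_and, Finset.sum_ite_eq']

lemma Skel.sum_pair {V : Type*} [Fintype V] {p q : V} (hpq : p ≠ q) (c : ℝ) :
    ∑ a : V, ∑ b : V, (if s(a,b) = s(p,q) then c else 0) = 2*c := by
  have key : ∀ a b : V, (if s(a,b) = s(p,q) then c else 0)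
      = (if a = p ∧ b = q then c else 0) + (if a = q ∧ b = p then c else 0) := by
    intro a b
    by_cases h : s(a,b) = s(p,q)
    · rw [if_pos h]
      rcases Sym2.eq_iff.mp h with ⟨rfl, rfl⟩ | ⟨rfl, rfl⟩ <;>
        simp [hpq, hpq.symm, Ne.symm]
    · rw [if_neg h]
      rw [Sym2.eq_iff] at h
      push_neg at h
      rcases h with ⟨h1, h2⟩
      rw [if_neg (fun hh => h1 hh.1 hh.2), if_neg (fun hh => h2 hh.1 hh.2)]
      norm_num
  simp_rw [key, Finset.sum_add_distrib]
  rw [Skel.sum_single, Skel.sum_single]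
  ring

/-- The exchange argument: in a minimum spanning tree of a metric space, for any edge `uv`,
there is no point `t` on `u`'s side that is strictly closer to `v` than `u` is. -/
lemma Skel.exchange {X : Type*} [MetricSpace X] [Fintype X] {W : SimpleGraph X}
    (hW : IsMST (fun a b => dist a b) W) {u v t : X} (huv : W.Adj u v)
    (hreach : (W.deleteEdges {s(u,v)}).Reachable t u) (hlt : dist t v < dist u v) : False := by
  obtain ⟨hWt, hmin⟩ := hW
  have hacyc := hWt.IsAcyclic
  have hconn := hWt.isConnected
  have hne : u ≠ v := huv.ne
  have hbr : ¬ (W.deleteEdges {s(u,v)}).Reachable u v := by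
    have h1 := (isAcyclic_iff_forall_adj_isBridge.mp hacyc) huv
    exact isBridge_iff.mp h1
  have htu : t ≠ u := by
    rintro rfl
    exact absurd hlt (lt_irrefl _)
  have htv : t ≠ v := by rintro rfl; exact hbr hreach.symm
  have hWtv : ¬ W.Adj t v := by
    intro h
    have hd : (W.deleteEdges {s(u,v)}).Adj t v := by
      simp only [deleteEdges_adj, Set.mem_singleton_iff, Sym2.eq_iff]
      refine ⟨h, ?_⟩
      rintro (⟨h3, -⟩ | ⟨h3, -⟩)
      · exact htu h3
      · exact htv h3
    exact hbr (hd.symm.reachable.trans hreach).symm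
  set Wd := W.deleteEdges {s(u,v)} with hWd
  set W' := Wd ⊔ SimpleGraph.fromEdgeSet {s(t,v)} with hW'def
  have hle : Wd ≤ W' := le_sup_left
  have htvadj : W'.Adj t v := by
    rw [hW'def]
    simp [htv]
  have hW'u : ∀ x : X, W'.Reachable x u := by
    intro x
    rcases Skel.reach_split W u v (hconn x u) with h | h
    · exact h.mono hle
    · exact (h.mono hle).trans ((htvadj.symm.reachable).trans (hreach.mono hle))
  have hW'conn : W'.Connected := by
    rw [connected_iff]
    exact ⟨fun x y => (hW'u x).trans (hW'u y).symm, ⟨u⟩⟩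
  have hW'acyc : W'.IsAcyclic := by
    intro z c hc
    by_cases hmem : s(t,v) ∈ c.edges
    · have h2 : W'.Adj t v ∧ (W' \ SimpleGraph.fromEdgeSet {s(t,v)}).Reachable t v :=
        (adj_and_reachable_delete_edges_iff_exists_cycle).mpr ⟨z, c, hc, hmem⟩
      have h3 : (W' \ SimpleGraph.fromEdgeSet {s(t,v)}) ≤ Wd := by
        intro a b hab
        rw [sdiff_adj, hW'def, sup_adj] at hab
        rcases hab with ⟨h4 | h4, h5⟩
        · exact h4
        · exact absurd h4 h5
      exact hbr (hreach.symm.trans ((h2.2).mono h3))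
    · have hsub : ∀ e ∈ c.edges, e ∈ W.edgeSet := by
        intro e he
        have h4 : e ∈ W'.edgeSet := c.edges_subset_edgeSet he
        rw [hW'def, edgeSet_sup, edgeSet_fromEdgeSet] at h4
        rcases h4 with h4 | h4
        · exact (edgeSet_mono (deleteEdges_le _)) h4
        · rw [Set.mem_diff, Set.mem_singleton_iff] at h4
          exact absurd (h4.1 ▸ he) hmem
      exact hacyc (c.transfer W hsub) (hc.transfer hsub)
  have hpt : ∀ a b : X, (@ite ℝ (W'.Adj a b) (Classical.propDecidable _) (dist a b) 0) =
      (if W.Adj a b then dist a b else 0)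
      + (if s(a,b) = s(t,v) then dist t v else 0)
      - (if s(a,b) = s(u,v) then dist u v else 0) := by
    intro a b
    by_cases h1 : s(a,b) = s(u,v)
    · have h2 : s(a,b) ≠ s(t,v) := by
        rw [h1]
        intro hh
        rcases Sym2.eq_iff.mp hh with ⟨h3, -⟩ | ⟨h3, -⟩
        · exact htu h3.symm
        · exact hne h3
      rw [if_pos h1, if_neg h2]
      have hW'not : ¬ W'.Adj a b := by
        rw [hW'def, sup_adj, hWd]
        rintro (h3 | h3)
        · rw [deleteEdges_adj] at h3
          exact h3.2 h1
        · rw [fromEdgeSet_adj, Set.mem_singleton_iff] at h3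
          exact h2 h3.1
      rw [if_neg hW'not]
      rcases Sym2.eq_iff.mp h1 with ⟨rfl, rfl⟩ | ⟨rfl, rfl⟩
      · rw [if_pos huv]; ring
      · rw [if_pos huv.symm, _root_.dist_comm a b]; ring
    · by_cases h2 : s(a,b) = s(t,v)
      · rw [if_neg h1, if_pos h2]
        have hW'yes : W'.Adj a b := by
          rw [hW'def, sup_adj, fromEdgeSet_adj, Set.mem_singleton_iff]
          right
          refine ⟨h2, ?_⟩
          rintro rfl
          rcases Sym2.eq_iff.mp h2 with ⟨rfl, rfl⟩ | ⟨rfl, rfl⟩ <;> exact htv rfl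
        rw [if_pos hW'yes]
        rcases Sym2.eq_iff.mp h2 with ⟨rfl, rfl⟩ | ⟨rfl, rfl⟩
        · rw [if_neg hWtv]; ring
        · rw [if_neg (fun h => hWtv h.symm), _root_.dist_comm a b]; ring
      · have hiff : W'.Adj a b ↔ W.Adj a b := by
          rw [hW'def, sup_adj, hWd, deleteEdges_adj, fromEdgeSet_adj, Set.mem_singleton_iff]
          constructor
          · rintro (h3 | h3)
            · exact h3.1
            · exact absurd h3.1 h2
          · intro h3
            exact Or.inl ⟨h3, fun h4 => h1 (by simpa using h4)⟩
        rw [if_neg h1, if_neg h2]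
        by_cases h3 : W.Adj a b
        · rw [if_pos h3, if_pos (hiff.mpr h3)]; ring
        · rw [if_neg h3, if_neg (fun h4 => h3 (hiff.mp h4))]; ring
  have hcost : graphCost (fun a b => dist a b) W'
      = graphCost (fun a b => dist a b) W + dist t v - dist u v := by
    have hG : ∀ G : SimpleGraph X, graphCost (fun a b => dist a b) G
        = (∑ a : X, ∑ b : X, (if G.Adj a b then dist a b else 0)) / 2 := by
      intro G
      unfold graphCost
      rw [finsum_eq_sum_of_fintype]
      congr 1
      exact Finset.sum_congr rfl fun _ _ => finsum_eq_sum_of_fintype _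
    rw [hG, hG]
    have hstep : (∑ a : X, ∑ b : X, @ite ℝ (W'.Adj a b) (Classical.propDecidable _) (dist a b) 0)
        = (∑ a : X, ∑ b : X, if W.Adj a b then dist a b else 0)
          + (∑ a : X, ∑ b : X, if s(a,b) = s(t,v) then dist t v else 0)
          - (∑ a : X, ∑ b : X, if s(a,b) = s(u,v) then dist u v else 0) := by
      rw [← Finset.sum_add_distrib, ← Finset.sum_sub_distrib]
      refine Finset.sum_congr rfl fun a _ => ?_
      rw [← Finset.sum_add_distrib, ← Finset.sum_sub_distrib]
      exact Finset.sum_congr rfl fun b _ => hpt a b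
    rw [hstep, Skel.sum_pair htv (dist t v), Skel.sum_pair hne (dist u v)]
    ring
  have hfin := hmin W' ⟨hW'conn, hW'acyc⟩
  rw [hcost] at hfin
  linarith

lemma Skel.sideOr {X : Type*} (Vc : Set X) (Ec : Set (Set X))
    (htwo : ∀ A ∈ Ec, ∃ u v : X, u ≠ v ∧ Vc ∩ A = {u, v})
    (hNconn : (nerve Vc Ec).Connected)
    (hnopar : ∀ A ∈ Ec, ∀ B ∈ Ec, ∀ u v : X, u ≠ v → u ∈ Vc → v ∈ Vc →
      u ∈ A → v ∈ A → u ∈ B → v ∈ B → A = B)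
    {A : Set X} (hA : A ∈ Ec) {a b : X} (haV : a ∈ Vc) (hbV : b ∈ Vc)
    (hab : a ≠ b) (haA : a ∈ A) (hbA : b ∈ A)
    {Nd : SimpleGraph ↥Vc}
    (hNd : Nd = (nerve Vc Ec).deleteEdges {s(⟨a,haV⟩, ⟨b,hbV⟩)}) :
    ∀ B ∈ Ec, B ≠ A →
      (∀ x (hx : x ∈ Vc), x ∈ B → Nd.Reachable ⟨x,hx⟩ ⟨a,haV⟩) ∨
      (∀ x (hx : x ∈ Vc), x ∈ B → Nd.Reachable ⟨x,hx⟩ ⟨b,hbV⟩) := by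
  intro B hB hBA
  obtain ⟨p, q, hpq, hVB⟩ := htwo B hB
  have hp : p ∈ Vc ∩ B := by rw [hVB]; exact Set.mem_insert _ _
  have hq : q ∈ Vc ∩ B := by rw [hVB]; exact Set.mem_insert_of_mem _ rfl
  have hadjN : (nerve Vc Ec).Adj ⟨p, hp.1⟩ ⟨q, hq.1⟩ :=
    ⟨fun h => hpq (congrArg Subtype.val h), B, hB, hp.2, hq.2⟩
  have hedge : s((⟨p, hp.1⟩ : Vc), (⟨q, hq.1⟩ : Vc)) ≠ s((⟨a,haV⟩ : Vc), (⟨b,hbV⟩ : Vc)) := by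
    intro h
    have haB : a ∈ B ∧ b ∈ B := by
      rcases Sym2.eq_iff.mp h with ⟨h3, h4⟩ | ⟨h3, h4⟩
      · have h3' : p = a := congrArg Subtype.val h3
        have h4' : q = b := congrArg Subtype.val h4
        exact ⟨h3' ▸ hp.2, h4' ▸ hq.2⟩
      · have h3' : p = b := congrArg Subtype.val h3
        have h4' : q = a := congrArg Subtype.val h4
        exact ⟨h4' ▸ hq.2, h3' ▸ hp.2⟩
    exact hBA (hnopar B hB A hA a b hab haV hbV haB.1 haB.2 haA hbA)
  have hadjNd : Nd.Adj ⟨p, hp.1⟩ ⟨q, hq.1⟩ := by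
    rw [hNd, SimpleGraph.deleteEdges_adj]
    exact ⟨hadjN, by simpa using hedge⟩
  have hreach := hNconn.preconnected ⟨p, hp.1⟩ ⟨a, haV⟩
  rcases Skel.reach_split (nerve Vc Ec) ⟨a,haV⟩ ⟨b,hbV⟩ hreach with h | h
  · left
    intro x hx hxB
    have h' : Nd.Reachable ⟨p, hp.1⟩ ⟨a, haV⟩ := hNd ▸ h
    have hxVB : x ∈ Vc ∩ B := ⟨hx, hxB⟩
    rw [hVB, Set.mem_insert_iff, Set.mem_singleton_iff] at hxVB
    rcases hxVB with rfl | rfl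
    · exact h'
    · exact hadjNd.symm.reachable.trans h'
  · right
    intro x hx hxB
    have h' : Nd.Reachable ⟨p, hp.1⟩ ⟨b, hbV⟩ := hNd ▸ h
    have hxVB : x ∈ Vc ∩ B := ⟨hx, hxB⟩
    rw [hVB, Set.mem_insert_iff, Set.mem_singleton_iff] at hxVB
    rcases hxVB with rfl | rfl
    · exact h'
    · exact hadjNd.symm.reachable.trans h'

lemma Skel.interSub {X : Type*} (Vc : Set X) (Ec : Set (Set X))
    (hinter : ∀ A ∈ Ec, ∀ B ∈ Ec, A ≠ B → (A ∩ B).Subsingleton ∧ A ∩ B ⊆ Vc)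
    {A : Set X} (hA : A ∈ Ec) {a b : X} (haV : a ∈ Vc) (hbV : b ∈ Vc)
    (hVA : Vc ∩ A = {a, b})
    {Nd : SimpleGraph ↥Vc}
    (hnreach : ¬ Nd.Reachable ⟨a,haV⟩ ⟨b,hbV⟩) :
    ∀ B ∈ Ec, B ≠ A →
      (∀ x (hx : x ∈ Vc), x ∈ B → Nd.Reachable ⟨x,hx⟩ ⟨a,haV⟩) →
      ∀ x, x ∈ A → x ∈ B → x = a := by
  intro B hB hBA hside x hxA hxB
  have hxV : x ∈ Vc := (hinter A hA B hB (Ne.symm hBA)).2 ⟨hxA, hxB⟩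
  have hx2 : x ∈ Vc ∩ A := ⟨hxV, hxA⟩
  rw [hVA, Set.mem_insert_iff, Set.mem_singleton_iff] at hx2
  rcases hx2 with rfl | rfl
  · rfl
  · exact absurd (hside x hxV hxB) (fun h => hnreach h.symm)

lemma Skel.excursionAux {X : Type*} (Vc : Set X) (Ec : Set (Set X))
    (hinter : ∀ A ∈ Ec, ∀ B ∈ Ec, A ≠ B → (A ∩ B).Subsingleton ∧ A ∩ B ⊆ Vc)
    (htwo : ∀ A ∈ Ec, ∃ u v : X, u ≠ v ∧ Vc ∩ A = {u, v})
    (hNconn : (nerve Vc Ec).Connected)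
    (hnopar : ∀ A ∈ Ec, ∀ B ∈ Ec, ∀ u v : X, u ≠ v → u ∈ Vc → v ∈ Vc →
      u ∈ A → v ∈ A → u ∈ B → v ∈ B → A = B)
    {A : Set X} (hA : A ∈ Ec) {a b : X} (haV : a ∈ Vc) (hbV : b ∈ Vc)
    (hab : a ≠ b) (haA : a ∈ A) (hbA : b ∈ A) (hVA : Vc ∩ A = {a, b})
    {Nd : SimpleGraph ↥Vc}
    (hNd : Nd = (nerve Vc Ec).deleteEdges {s(⟨a,haV⟩, ⟨b,hbV⟩)})
    (hnreach : ¬ Nd.Reachable ⟨a,haV⟩ ⟨b,hbV⟩)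
    {W : SimpleGraph X}
    (hloc : ∀ u v : X, W.Adj u v → ∃ B ∈ Ec, u ∈ B ∧ v ∈ B) :
    ∀ (w y : X) (p : W.Walk w y), y ∈ A → w ∉ A →
      (∃ B ∈ Ec, B ≠ A ∧ (∀ x (hx : x ∈ Vc), x ∈ B → Nd.Reachable ⟨x,hx⟩ ⟨a,haV⟩) ∧ w ∈ B) →
      a ∈ p.support := by
  intro w y p
  induction p with
  | nil =>
    intro hy hw _
    exact absurd hy hw
  | @cons w w₂ y hadj p ih =>
    intro hy hw hBex
    obtain ⟨B, hB, hBA, hside, hwB⟩ := hBex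
    obtain ⟨B', hB', hwB', hw₂B'⟩ := hloc w w₂ hadj
    have hB'A : B' ≠ A := fun h => hw (h ▸ hwB')
    have hside' : (∀ x (hx : x ∈ Vc), x ∈ B' → Nd.Reachable ⟨x,hx⟩ ⟨a,haV⟩) := by
      rcases Skel.sideOr Vc Ec htwo hNconn hnopar hA haV hbV hab haA hbA hNd B' hB' hB'A with
        h | h
      · exact h
      · exfalso
        by_cases hBB' : B = B'
        · subst hBB'
          obtain ⟨p0, q0, hpq0, hVB0⟩ := htwo B hB
          have hp0 : p0 ∈ Vc ∩ B := by rw [hVB0]; exact Set.mem_insert _ _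
          exact hnreach ((hside p0 hp0.1 hp0.2).symm.trans (h p0 hp0.1 hp0.2))
        · have hwV : w ∈ Vc := (hinter B hB B' hB' hBB').2 ⟨hwB, hwB'⟩
          exact hnreach ((hside w hwV hwB).symm.trans (h w hwV hwB'))
    by_cases hw₂A : w₂ ∈ A
    · have hw₂a : w₂ = a :=
        Skel.interSub Vc Ec hinter hA haV hbV hVA hnreach B' hB' hB'A hside' w₂ hw₂A hw₂B'
      rw [SimpleGraph.Walk.support_cons]
      exact List.mem_cons_of_mem _ (hw₂a ▸ p.start_mem_support)
    · have hrec : a ∈ p.support := ih hy hw₂A ⟨B', hB', hB'A, hside', hw₂B'⟩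
      rw [SimpleGraph.Walk.support_cons]
      exact List.mem_cons_of_mem _ hrec

end MSTAuxiliary

/-- For a tree-cover of a finite metric space and a minimum spanning tree `W`,
the restriction of `W` to each cover set is a tree. -/
theorem statement5 {X : Type*} [MetricSpace X] [Finite X]
    (Vc : Set X) (Ec : Set (Set X))
    (hcov : IsTreeCover (fun a b => dist a b) Vc Ec)
    (W : SimpleGraph X) (hW : IsMST (fun a b => dist a b) W) :
    ∀ A ∈ Ec, (W.induce A).IsTree := by
  classical
  obtain ⟨_inst⟩ := nonempty_fintype X
  obtain ⟨⟨hVfin, hEfin, hcoverU, hinter, htwo⟩, ⟨hNtree, hnopar⟩, hsep⟩ := hcov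
  have hWt : W.IsTree := hW.1
  have hconn := hWt.isConnected
  have hacyc := hWt.IsAcyclic
  have hloc : ∀ u v : X, W.Adj u v → ∃ B ∈ Ec, u ∈ B ∧ v ∈ B := by
    intro u v huv
    by_contra hno
    obtain ⟨t, ht⟩ := hsep u v huv.ne hno
    simp only [max_lt_iff] at ht
    obtain ⟨h1, h2⟩ := ht
    rcases Skel.reach_split W u v (hconn t u) with h | h
    · exact Skel.exchange hW huv h (by rwa [_root_.dist_comm v t] at h2)
    · have h' : (W.deleteEdges {s(v,u)}).Reachable t v := by
        rwa [show s(v,u) = s(u,v) from Sym2.eq_swap]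
      refine Skel.exchange hW huv.symm h' ?_
      rwa [_root_.dist_comm u t, _root_.dist_comm u v] at h1
  intro A hA
  obtain ⟨a, b, hab, hVA⟩ := htwo A hA
  have ha : a ∈ Vc ∩ A := by rw [hVA]; exact Set.mem_insert _ _
  have hb : b ∈ Vc ∩ A := by rw [hVA]; exact Set.mem_insert_of_mem _ rfl
  have hNconn : (nerve Vc Ec).Connected := hNtree.isConnected
  have hNadj : (nerve Vc Ec).Adj ⟨a, ha.1⟩ ⟨b, hb.1⟩ :=
    ⟨fun h => hab (congrArg Subtype.val h), A, hA, ha.2, hb.2⟩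
  have hnreach :
      ¬ ((nerve Vc Ec).deleteEdges {s(⟨a,ha.1⟩, ⟨b,hb.1⟩)}).Reachable ⟨a,ha.1⟩ ⟨b,hb.1⟩ := by
    have h1 := (SimpleGraph.isAcyclic_iff_forall_adj_isBridge.mp hNtree.IsAcyclic) hNadj
    exact SimpleGraph.isBridge_iff.mp h1
  have hVA' : Vc ∩ A = {b, a} := by rw [hVA, Set.pair_comm]
  have hNd' : ((nerve Vc Ec).deleteEdges {s(⟨a,ha.1⟩, ⟨b,hb.1⟩)})
      = (nerve Vc Ec).deleteEdges {s(⟨b,hb.1⟩, ⟨a,ha.1⟩)} := by rw [Sym2.eq_swap]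
  have hnreach' :
      ¬ ((nerve Vc Ec).deleteEdges {s(⟨a,ha.1⟩, ⟨b,hb.1⟩)}).Reachable ⟨b,hb.1⟩ ⟨a,ha.1⟩ :=
    fun h => hnreach h.symm
  have hstay : ∀ (u y : X) (p : W.Walk u y), p.IsPath → u ∈ A → y ∈ A →
      ∀ x ∈ p.support, x ∈ A := by
    intro u y p
    induction p with
    | nil =>
      intro _ hu _ x hx
      rw [SimpleGraph.Walk.support_nil, List.mem_singleton] at hx
      exact hx ▸ hu
    | @cons u w y hadj p ih =>
      intro hp hu hy x hx
      have hp' := hp.of_cons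
      have hnotin : u ∉ p.support := ((SimpleGraph.Walk.cons_isPath_iff hadj p).mp hp).2
      by_cases hwA : w ∈ A
      · rw [SimpleGraph.Walk.support_cons, List.mem_cons] at hx
        rcases hx with rfl | hx
        · exact hu
        · exact ih hp' hwA hy x hx
      · exfalso
        obtain ⟨B, hB, huB, hwB⟩ := hloc u w hadj
        have hBA : B ≠ A := fun h => hwA (h ▸ hwB)
        rcases Skel.sideOr Vc Ec htwo hNconn hnopar hA ha.1 hb.1 hab ha.2 hb.2 rfl B hB hBA
          with hside | hside
        · have hua : u = a :=
            Skel.interSub Vc Ec hinter hA ha.1 hb.1 hVA hnreach B hB hBA hside u hu huB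
          have hmem : a ∈ p.support :=
            Skel.excursionAux Vc Ec hinter htwo hNconn hnopar hA ha.1 hb.1 hab ha.2 hb.2 hVA
              rfl hnreach hloc w y p hy hwA ⟨B, hB, hBA, hside, hwB⟩
          exact hnotin (hua ▸ hmem)
        · have hub : u = b :=
            Skel.interSub Vc Ec hinter hA hb.1 ha.1 hVA' hnreach' B hB hBA hside u hu huB
          have hmem : b ∈ p.support :=
            Skel.excursionAux Vc Ec hinter htwo hNconn hnopar hA hb.1 ha.1 hab.symm hb.2 ha.2
              hVA' hNd' hnreach' hloc w y p hy hwA ⟨B, hB, hBA, hside, hwB⟩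
          exact hnotin (hub ▸ hmem)
  have hlift : ∀ (u y : X) (q : W.Walk u y), (∀ z ∈ q.support, z ∈ A) →
      ∀ (hu : u ∈ A) (hy : y ∈ A), (W.induce A).Reachable ⟨u, hu⟩ ⟨y, hy⟩ := by
    intro u y q
    induction q with
    | nil =>
      intro _ hu hy
      exact SimpleGraph.Reachable.refl _
    | @cons u w y hadj q ih =>
      intro hsup hu hy
      have hw : w ∈ A := hsup w (by
        rw [SimpleGraph.Walk.support_cons]
        exact List.mem_cons_of_mem _ q.start_mem_support)
      have hadj' : (W.induce A).Adj ⟨u, hu⟩ ⟨w, hw⟩ := hadj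
      exact hadj'.reachable.trans (ih (fun z hz => hsup z (by
        rw [SimpleGraph.Walk.support_cons]
        exact List.mem_cons_of_mem _ hz)) hw hy)
  constructor
  · rw [SimpleGraph.connected_iff]
    constructor
    · rintro ⟨x, hxA⟩ ⟨y, hyA⟩
      obtain ⟨p0⟩ := hconn x y
      exact hlift x y p0.bypass (hstay x y p0.bypass p0.bypass_isPath hxA hyA) hxA hyA
    · exact ⟨⟨a, ha.2⟩⟩
  · intro z c hc
    have hinj : Function.Injective (fun x : ↥A => (x : X)) := Subtype.val_injective
    let f : (W.induce A) →g W := ⟨fun x => (x : X), fun {x y} h => h⟩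
    have hmap : (c.map f).IsCycle :=
      (SimpleGraph.Walk.map_isCycle_iff_of_injective hinj).mpr hc
    exact hacyc _ hmap
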